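/- Let $f$ be an entire function of genus zero with zero set $\{1/\lambda_n\}$ (so $f(z) = \prod_{n \geq 0}(1 - z\lambda_n)$ with $\sum_n |\lambda_n| < \infty$), $f(0)=1$, and let $N(r) = \#\{n : |\lambda_n| \geq r\}$. Suppose there is $\tau > 0$ such that $N(r) \leq |\log r|^{\tau}$ for all sufficiently small $r > 0$. Then there is a constant $C > 0$ such that $\log|f(z)| \leq C (\log(1+|z|))^{1+\tau}$ for all $z \in \mathbb{C}$ with $|z|$ sufficiently large. In particular, the order of growth of $z \mapsto f(e^z)$ is at most $\tau + 1$. -/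

import Mathlib

open scoped BigOperators

open Filter Topology

set_option maxHeartbeats 1000000

private lemma finite_ge (a : ℕ → ℝ) (hs : Summable a) {r : ℝ} (hr : 0 < r) :
    {n : ℕ | r ≤ a n}.Finite := by
  have h2 : ∀ᶠ n in atTop, a n < r := hs.tendsto_atTop_zero.eventually_lt_const hr
  obtain ⟨N, hN⟩ := eventually_atTop.mp h2
  refine (Set.finite_Iio N).subset fun n hn => ?_
  by_contra hcon
  exact absurd (hN n (not_lt.mp hcon)) (not_lt.mpr hn)

private lemma psi_small (a : ℕ → ℝ) (ha : ∀ n, 0 ≤ a n) (hs : Summable a) {η : ℝ} (hη : 0 < η) :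
    ∃ δ₀ : ℝ, 0 < δ₀ ∧ ∀ x : ℝ, 0 < x → x ≤ δ₀ →
      ∑' n, ({m | a m < x}).indicator a n ≤ η := by
  obtain ⟨G, hG⟩ := ((tendsto_order.1 (tendsto_tsum_compl_atTop_zero a)).2 η hη).exists
  classical
  set F := G.filter (fun n => 0 < a n) with hF
  by_cases hFne : F.Nonempty
  · refine ⟨F.inf' hFne a, (Finset.lt_inf'_iff hFne).mpr fun n hn => (Finset.mem_filter.mp hn).2, ?_⟩
    intro x hx hxle
    have hpt : ∀ n, ({m | a m < x}).indicator a n ≤ ({m | m ∉ G}).indicator a n := by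
      intro n
      by_cases hn : a n < x
      · rw [Set.indicator_of_mem (by exact hn)]
        by_cases hnG : n ∈ G
        · rcases (ha n).eq_or_lt with h0 | h0
          · exact le_trans (le_of_eq h0.symm) (Set.indicator_nonneg (fun m _ => ha m) n)
          · exfalso
            have : n ∈ F := Finset.mem_filter.mpr ⟨hnG, h0⟩
            have := Finset.inf'_le a this
            linarith
        · rw [Set.indicator_of_mem (by exact hnG)]
      · rw [Set.indicator_of_notMem (by exact hn)]
        exact Set.indicator_nonneg (fun m _ => ha m) n
    calc ∑' n, ({m | a m < x}).indicator a n
        ≤ ∑' n, ({m | m ∉ G}).indicator a n :=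
          Summable.tsum_le_tsum hpt (hs.indicator _) (hs.indicator _)
      _ = ∑' n : {m // m ∉ G}, a n := (tsum_subtype {m | m ∉ G} a).symm
      _ ≤ η := hG.le
  · refine ⟨1, one_pos, fun x hx hxle => ?_⟩
    have hpt : ∀ n, ({m | a m < x}).indicator a n ≤ ({m | m ∉ G}).indicator a n := by
      intro n
      by_cases hn : a n < x
      · rw [Set.indicator_of_mem (by exact hn)]
        by_cases hnG : n ∈ G
        · have h0 : a n = 0 := by
            by_contra hne
            exact hFne ⟨n, Finset.mem_filter.mpr ⟨hnG, (ha n).lt_of_ne (Ne.symm hne)⟩⟩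
          exact le_trans (le_of_eq h0) (Set.indicator_nonneg (fun m _ => ha m) n)
        · rw [Set.indicator_of_mem (by exact hnG)]
      · rw [Set.indicator_of_notMem (by exact hn)]
        exact Set.indicator_nonneg (fun m _ => ha m) n
    calc ∑' n, ({m | a m < x}).indicator a n
        ≤ ∑' n, ({m | m ∉ G}).indicator a n :=
          Summable.tsum_le_tsum hpt (hs.indicator _) (hs.indicator _)
      _ = ∑' n : {m // m ∉ G}, a n := (tsum_subtype {m | m ∉ G} a).symm
      _ ≤ η := hG.le

private lemma psi_step (a : ℕ → ℝ) (ha : ∀ n, 0 ≤ a n) (hs : Summable a)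
    {x : ℝ} (hx : 0 < x) (hx1 : x ≤ 1) :
    ∑' n, ({m | a m < x}).indicator a n ≤
      (({n | x^2 ≤ a n}).ncard : ℝ) * x + ∑' n, ({m | a m < x^2}).indicator a n := by
  have hx2 : x^2 ≤ x := by nlinarith
  have hsplit : ∀ n, ({m | a m < x}).indicator a n =
      ({m | x^2 ≤ a m ∧ a m < x}).indicator a n + ({m | a m < x^2}).indicator a n := by
    intro n
    rcases lt_or_ge (a n) (x^2) with h | h
    · rw [Set.indicator_of_mem (show n ∈ {m | a m < x^2} from h),
        Set.indicator_of_mem (show n ∈ {m | a m < x} from lt_of_lt_of_le h hx2),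
        Set.indicator_of_notMem (show n ∉ {m | x^2 ≤ a m ∧ a m < x} from
          fun hc => absurd hc.1 (not_le.mpr h))]
      ring
    · rcases lt_or_ge (a n) x with h2 | h2
      · rw [Set.indicator_of_mem (show n ∈ {m | a m < x} from h2),
          Set.indicator_of_mem (show n ∈ {m | x^2 ≤ a m ∧ a m < x} from ⟨h, h2⟩),
          Set.indicator_of_notMem (show n ∉ {m | a m < x^2} from not_lt.mpr h)]
        ring
      · rw [Set.indicator_of_notMem (show n ∉ {m | a m < x} from not_lt.mpr h2),
          Set.indicator_of_notMem (show n ∉ {m | x^2 ≤ a m ∧ a m < x} from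
            fun hc => absurd hc.2 (not_lt.mpr h2)),
          Set.indicator_of_notMem (show n ∉ {m | a m < x^2} from
            not_lt.mpr (le_trans (le_trans hx2 h2) (le_refl _)))]
        ring
  have hEfin : ({m | x^2 ≤ a m ∧ a m < x}).Finite :=
    (finite_ge a hs (by positivity : (0:ℝ) < x^2)).subset fun n hn => hn.1
  have h1 : ∑' n, ({m | x^2 ≤ a m ∧ a m < x}).indicator a n ≤ (({n | x^2 ≤ a n}).ncard : ℝ) * x := by
    rw [tsum_eq_sum (s := hEfin.toFinset)
      (fun b hb => Set.indicator_of_notMem (by simpa using hb) a)]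
    calc ∑ n ∈ hEfin.toFinset, ({m | x^2 ≤ a m ∧ a m < x}).indicator a n
        ≤ ∑ n ∈ hEfin.toFinset, x := by
          refine Finset.sum_le_sum fun n hn => ?_
          have hn' := hEfin.mem_toFinset.mp hn
          rw [Set.indicator_of_mem hn' a]
          exact hn'.2.le
      _ = (hEfin.toFinset.card : ℝ) * x := by rw [Finset.sum_const, nsmul_eq_mul]
      _ ≤ (({n | x^2 ≤ a n}).ncard : ℝ) * x := by
          refine mul_le_mul_of_nonneg_right ?_ hx.le
          rw [← Set.ncard_eq_toFinset_card _ hEfin]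
          exact Nat.cast_le.mpr (Set.ncard_le_ncard (fun n (hn : x^2 ≤ a n ∧ a n < x) => hn.1)
            (finite_ge a hs (by positivity)))
  calc ∑' n, ({m | a m < x}).indicator a n
      = ∑' n, (({m | x^2 ≤ a m ∧ a m < x}).indicator a n + ({m | a m < x^2}).indicator a n) :=
        tsum_congr hsplit
    _ = ∑' n, ({m | x^2 ≤ a m ∧ a m < x}).indicator a n
        + ∑' n, ({m | a m < x^2}).indicator a n := Summable.tsum_add (hs.indicator _) (hs.indicator _)
    _ ≤ _ := add_le_add_left h1 _

private lemma psi_le (a : ℕ → ℝ) (ha : ∀ n, 0 ≤ a n) (hs : Summable a)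
    (τ r0 : ℝ) (hτ : 0 < τ) (hr0 : 0 < r0)
    (hN : ∀ r : ℝ, 0 < r → r < r0 → (({n : ℕ | r ≤ a n}).ncard : ℝ) ≤ |Real.log r| ^ τ)
    {δ : ℝ} (hδ0 : 0 < δ) (hδr : δ < r0) (hδh : δ ≤ 1/2) (hδτ : δ * (2:ℝ)^τ ≤ 1/2) :
    ∑' n, ({m | a m < δ}).indicator a n ≤ 2 * (δ * (2*|Real.log δ|)^τ) := by
  set d : ℕ → ℝ := fun J => δ ^ (2^J) with hd
  have hd0 : d 0 = δ := by simp [hd]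
  have hdsucc : ∀ J, d (J+1) = (d J)^2 := by
    intro J; simp only [hd]; rw [← pow_mul, pow_succ]
  have hdpos : ∀ J, 0 < d J := fun J => pow_pos hδ0 _
  have hdle : ∀ J, d J ≤ δ := by
    intro J
    have := pow_le_pow_of_le_one hδ0.le (by linarith : δ ≤ 1) (Nat.one_le_two_pow : 1 ≤ 2^J)
    simpa [hd] using this
  have hdle1 : ∀ J, d J ≤ 1 := fun J => le_trans (hdle J) (by linarith)
  -- logs
  have hlog : ∀ J, |Real.log (d J)| = 2^J * |Real.log δ| := by
    intro J
    simp only [hd]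
    rw [Real.log_pow, abs_mul, abs_of_nonneg (by positivity : (0:ℝ) ≤ ((2^J : ℕ) : ℝ))]
    push_cast
    ring
  -- Claim A : recursion
  have claimA : ∀ J : ℕ, ∑' n, ({m | a m < δ}).indicator a n ≤
      (∑ j ∈ Finset.range J, (({n | d (j+1) ≤ a n}).ncard : ℝ) * d j)
        + ∑' n, ({m | a m < d J}).indicator a n := by
    intro J
    induction J with
    | zero => simp [hd0]
    | succ J ih =>
      refine le_trans ih ?_
      rw [Finset.sum_range_succ, add_assoc]
      refine add_le_add_right ?_ _
      have := psi_step a ha hs (hdpos J) (hdle1 J)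
      rw [← hdsucc J] at this
      exact this
  -- Claim B : geometric domination of terms
  have claimB : ∀ j : ℕ, (({n | d (j+1) ≤ a n}).ncard : ℝ) * d j ≤
      ((2*|Real.log δ|)^τ * δ) * (1/2)^j := by
    intro j
    have hcount : (({n | d (j+1) ≤ a n}).ncard : ℝ) ≤ ((2:ℝ)^(j+1) * |Real.log δ|)^τ := by
      have h1 := hN (d (j+1)) (hdpos (j+1)) (lt_of_le_of_lt (hdle (j+1)) hδr)
      rwa [hlog (j+1)] at h1
    have hterm : ∀ i : ℕ, ((2:ℝ)^(i+1) * |Real.log δ|)^τ * d i ≤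
        ((2*|Real.log δ|)^τ * δ) * (1/2)^i := by
      intro i
      induction i with
      | zero => simp [hd0, pow_one]
      | succ i ih =>
        have habs : (0:ℝ) ≤ |Real.log δ| := abs_nonneg _
        have h2 : ((2:ℝ)^(i+2) * |Real.log δ|) = 2 * ((2:ℝ)^(i+1) * |Real.log δ|) := by ring
        have h3 : ((2:ℝ)^(i+2) * |Real.log δ|)^τ
            = (2:ℝ)^τ * ((2:ℝ)^(i+1) * |Real.log δ|)^τ := by
          rw [h2, Real.mul_rpow (by norm_num) (by positivity)]
        calc ((2:ℝ)^(i+1+1) * |Real.log δ|)^τ * d (i+1)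
            = (2:ℝ)^τ * ((2:ℝ)^(i+1) * |Real.log δ|)^τ * ((d i) * (d i)) := by
              rw [show (i+1+1) = i+2 from rfl, h3, hdsucc i]; ring
          _ ≤ (2:ℝ)^τ * ((2:ℝ)^(i+1) * |Real.log δ|)^τ * (δ * d i) := by
              refine mul_le_mul_of_nonneg_left ?_ (by positivity)
              exact mul_le_mul_of_nonneg_right (hdle i) (hdpos i).le
          _ = ((2:ℝ)^τ * δ) * (((2:ℝ)^(i+1) * |Real.log δ|)^τ * d i) := by ring
          _ ≤ ((2:ℝ)^τ * δ) * (((2*|Real.log δ|)^τ * δ) * (1/2)^i) := by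
              refine mul_le_mul_of_nonneg_left ih (by positivity)
          _ ≤ (1/2) * (((2*|Real.log δ|)^τ * δ) * (1/2)^i) := by
              refine mul_le_mul_of_nonneg_right ?_ (by positivity)
              calc (2:ℝ)^τ * δ = δ * (2:ℝ)^τ := by ring
                _ ≤ 1/2 := hδτ
          _ = ((2*|Real.log δ|)^τ * δ) * (1/2)^(i+1) := by ring
    exact le_trans (mul_le_mul_of_nonneg_right hcount (hdpos j).le) (hterm j)
  -- combine
  have hsumB : ∀ J : ℕ, (∑ j ∈ Finset.range J, (({n | d (j+1) ≤ a n}).ncard : ℝ) * d j)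
      ≤ 2 * (δ * (2*|Real.log δ|)^τ) := by
    intro J
    calc ∑ j ∈ Finset.range J, (({n | d (j+1) ≤ a n}).ncard : ℝ) * d j
        ≤ ∑ j ∈ Finset.range J, ((2*|Real.log δ|)^τ * δ) * (1/2)^j :=
          Finset.sum_le_sum fun j _ => claimB j
      _ = ((2*|Real.log δ|)^τ * δ) * ∑ j ∈ Finset.range J, (1/(2:ℝ))^j := by
          rw [Finset.mul_sum]
      _ ≤ ((2*|Real.log δ|)^τ * δ) * 2 :=
          mul_le_mul_of_nonneg_left (sum_geometric_two_le J) (by positivity)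
      _ = 2 * (δ * (2*|Real.log δ|)^τ) := by ring
  refine le_of_forall_pos_le_add fun η hη => ?_
  obtain ⟨δ₀, hδ₀, hsmall⟩ := psi_small a ha hs hη
  obtain ⟨J, hJ⟩ := exists_pow_lt_of_lt_one hδ₀ (by norm_num : (1:ℝ)/2 < 1)
  have hdJ : d J ≤ δ₀ := by
    have h1 : d J ≤ (1/2:ℝ)^(2^J) := by
      simp only [hd]
      exact pow_le_pow_left₀ hδ0.le hδh _
    have h2 : ((1:ℝ)/2)^(2^J) ≤ (1/2:ℝ)^J :=
      pow_le_pow_of_le_one (by norm_num) (by norm_num) (Nat.le_of_lt Nat.lt_two_pow_self)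
    linarith
  calc ∑' n, ({m | a m < δ}).indicator a n
      ≤ _ + ∑' n, ({m | a m < d J}).indicator a n := claimA J
    _ ≤ 2 * (δ * (2*|Real.log δ|)^τ) + η :=
        add_le_add (hsumB J) (hsmall (d J) (hdpos J) hdJ)

private lemma sum_log_bound (a : ℕ → ℝ) (ha : ∀ n, 0 ≤ a n) (hs : Summable a)
    (τ r0 : ℝ) (hτ : 0 < τ) (hr0 : 0 < r0)
    (hN : ∀ r : ℝ, 0 < r → r < r0 → (({n : ℕ | r ≤ a n}).ncard : ℝ) ≤ |Real.log r| ^ τ)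
    {R : ℝ} (hR : max 2 (max (2 * (2:ℝ)^τ) (max (2/r0) (Real.exp 1))) ≤ R) :
    ∑' n, Real.log (1 + R * a n) ≤
      (1 + (2:ℝ)^(1+τ) + ∑' n, a n) * (Real.log (1+R))^(1+τ) := by
  have hR2 : 2 ≤ R := le_trans (le_max_left _ _) hR
  have hRτ : 2 * (2:ℝ)^τ ≤ R := le_trans (le_trans (le_max_left _ _) (le_max_right _ _)) hR
  have hRr0 : 2/r0 ≤ R :=
    le_trans (le_trans (le_trans (le_max_left _ _) (le_max_right _ _)) (le_max_right _ _)) hR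
  have hRe : Real.exp 1 ≤ R :=
    le_trans (le_trans (le_trans (le_max_right _ _) (le_max_right _ _)) (le_max_right _ _)) hR
  have hRpos : (0:ℝ) < R := by linarith
  set δ := 1/R with hδ
  have hδ0 : 0 < δ := by positivity
  have hδr : δ < r0 := by
    rw [hδ, div_lt_iff₀ hRpos]
    have h1 : r0 * (2/r0) = 2 := by field_simp
    nlinarith [mul_le_mul_of_nonneg_left hRr0 hr0.le]
  have hδh : δ ≤ 1/2 := by
    rw [hδ]
    exact one_div_le_one_div_of_le two_pos hR2
  have h2τpos : (0:ℝ) < (2:ℝ)^τ := Real.rpow_pos_of_pos two_pos τ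
  have hδτ : δ * (2:ℝ)^τ ≤ 1/2 := by
    rw [hδ, div_mul_eq_mul_div, one_mul, div_le_iff₀ hRpos]
    nlinarith
  have hR1 : (1:ℝ) ≤ R := by linarith
  have hlogR0 : 0 ≤ Real.log R := Real.log_nonneg hR1
  have hlogδ : |Real.log δ| = Real.log R := by
    rw [hδ, one_div, Real.log_inv, abs_neg, abs_of_nonneg hlogR0]
  have hlR : 1 ≤ Real.log (1+R) := by
    rw [Real.le_log_iff_exp_le (by linarith)]
    linarith
  have hlogRle : Real.log R ≤ Real.log (1+R) := Real.log_le_log hRpos (by linarith)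
  set x := Real.log (1+R) with hx
  have hx0 : 0 ≤ x := by linarith
  set g := fun n => Real.log (1 + R * a n) with hg
  have hg0 : ∀ n, 0 ≤ g n := fun n => Real.log_nonneg (by nlinarith [ha n])
  have hgle : ∀ n, g n ≤ R * a n := by
    intro n
    have := Real.log_le_sub_one_of_pos (show (0:ℝ) < 1 + R * a n by nlinarith [ha n])
    simpa [hg] using this
  have hgsum : Summable g := Summable.of_nonneg_of_le hg0 hgle (hs.mul_left R)
  set B := {n : ℕ | δ ≤ a n} with hB
  have hBfin : B.Finite := finite_ge a hs hδ0
  have hcompl : Bᶜ = {m | a m < δ} := by ext n; simp [hB, not_le]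
  have hsplit : ∑' n, g n = ∑' n, B.indicator g n + ∑' n, Bᶜ.indicator g n := by
    rw [← Summable.tsum_add (hgsum.indicator _) (hgsum.indicator _)]
    refine tsum_congr fun n => ?_
    conv_lhs => rw [← Set.indicator_self_add_compl B g]
    rfl
  have A_def : (0:ℝ) ≤ ∑' n, a n := tsum_nonneg ha
  -- big part
  have hRR : R * (1/R) = 1 := by field_simp
  have hcard : ((B.ncard : ℝ)) ≤ x^τ := by
    have h1 := hN δ hδ0 hδr
    rw [hlogδ] at h1
    exact le_trans h1 (Real.rpow_le_rpow hlogR0 hlogRle hτ.le)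
  have hbig : ∑' n, B.indicator g n ≤ x^τ * x + ∑' n, a n := by
    rw [tsum_eq_sum (s := hBfin.toFinset)
      (fun b hb => Set.indicator_of_notMem (by simpa using hb) g)]
    have heach : ∀ n ∈ hBfin.toFinset, B.indicator g n ≤ x + a n := by
      intro n hn
      rw [Set.indicator_of_mem (hBfin.mem_toFinset.mp hn) g]
      have h1 : (0:ℝ) < 1 + R * a n := by nlinarith [ha n]
      have h2 : 1 + R * a n ≤ (1+R) * (1 + a n) := by nlinarith [ha n]
      calc g n ≤ Real.log ((1+R) * (1+a n)) := Real.log_le_log h1 h2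
        _ = Real.log (1+R) + Real.log (1+a n) := by
            rw [Real.log_mul (by positivity) (by nlinarith [ha n])]
        _ ≤ x + a n := by
            have := Real.log_le_sub_one_of_pos (show (0:ℝ) < 1 + a n by nlinarith [ha n])
            rw [hx]
            linarith
    calc ∑ n ∈ hBfin.toFinset, B.indicator g n ≤ ∑ n ∈ hBfin.toFinset, (x + a n) :=
          Finset.sum_le_sum heach
      _ = (hBfin.toFinset.card : ℝ) * x + ∑ n ∈ hBfin.toFinset, a n := by
          rw [Finset.sum_add_distrib, Finset.sum_const, nsmul_eq_mul]
      _ ≤ (B.ncard : ℝ) * x + ∑' n, a n := by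
          refine add_le_add ?_ (Summable.sum_le_tsum _ (fun n _ => ha n) hs)
          rw [Set.ncard_eq_toFinset_card _ hBfin]
      _ ≤ x^τ * x + ∑' n, a n := by
          refine add_le_add_left (mul_le_mul_of_nonneg_right hcard hx0) _
  -- small part
  have hsmall : ∑' n, Bᶜ.indicator g n ≤ (2:ℝ)^(1+τ) * x^τ := by
    have hstep1 : ∀ n, Bᶜ.indicator g n ≤ R * Bᶜ.indicator a n := by
      intro n
      by_cases h : n ∈ Bᶜ
      · rw [Set.indicator_of_mem h, Set.indicator_of_mem h]
        exact hgle n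
      · rw [Set.indicator_of_notMem h, Set.indicator_of_notMem h, mul_zero]
    have hpsi : ∑' n, Bᶜ.indicator a n ≤ 2 * (δ * (2*Real.log R)^τ) := by
      rw [hcompl]
      have := psi_le a ha hs τ r0 hτ hr0 hN hδ0 hδr hδh hδτ
      rwa [hlogδ] at this
    calc ∑' n, Bᶜ.indicator g n ≤ ∑' n, R * Bᶜ.indicator a n :=
          Summable.tsum_le_tsum hstep1 (hgsum.indicator _) ((hs.indicator _).mul_left R)
      _ = R * ∑' n, Bᶜ.indicator a n := tsum_mul_left
      _ ≤ R * (2 * (δ * (2*Real.log R)^τ)) :=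
          mul_le_mul_of_nonneg_left hpsi hRpos.le
      _ = 2 * (2*Real.log R)^τ := by
          rw [hδ, show R * (2 * (1 / R * (2 * Real.log R) ^ τ))
            = R * (1/R) * (2 * (2 * Real.log R) ^ τ) from by ring, hRR, one_mul]
      _ = 2 * ((2:ℝ)^τ * (Real.log R)^τ) := by
          rw [Real.mul_rpow (by norm_num) hlogR0]
      _ ≤ 2 * ((2:ℝ)^τ * x^τ) := by
          have := Real.rpow_le_rpow hlogR0 hlogRle hτ.le
          nlinarith
      _ = (2:ℝ)^(1+τ) * x^τ := by
          rw [Real.rpow_add two_pos, Real.rpow_one]; ring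
  -- combine
  have hxτ1 : x^τ * x = x^(1+τ) := by
    rw [Real.rpow_add (by linarith : (0:ℝ) < x), Real.rpow_one]; ring
  have hx1τ : (1:ℝ) ≤ x^(1+τ) := Real.one_le_rpow hlR (by linarith)
  have hxττ : x^τ ≤ x^(1+τ) := Real.rpow_le_rpow_of_exponent_le hlR (by linarith)
  have h2τ1pos : (0:ℝ) < (2:ℝ)^(1+τ) := Real.rpow_pos_of_pos two_pos _
  calc ∑' n, g n = ∑' n, B.indicator g n + ∑' n, Bᶜ.indicator g n := hsplit
    _ ≤ (x^τ * x + ∑' n, a n) + (2:ℝ)^(1+τ) * x^τ := add_le_add hbig hsmall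
    _ ≤ (1 + (2:ℝ)^(1+τ) + ∑' n, a n) * x^(1+τ) := by
        rw [hxτ1]
        nlinarith [mul_le_mul_of_nonneg_left hxττ h2τ1pos.le,
          mul_le_mul_of_nonneg_left hx1τ A_def]

private lemma tprod_norm_le (c : ℕ → ℂ) (g : ℕ → ℝ) (hg : Summable g) (hgn : ∀ n, 0 ≤ g n)
    (hb : ∀ n, ‖c n‖ ≤ Real.exp (g n)) : ‖∏' n, c n‖ ≤ Real.exp (∑' n, g n) := by
  by_cases hm : Multipliable c
  · have h1 : Tendsto (fun s : Finset ℕ => ‖∏ n ∈ s, c n‖) atTop (𝓝 ‖∏' n, c n‖) :=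
      Filter.Tendsto.norm hm.hasProd
    refine le_of_tendsto h1 (Filter.Eventually.of_forall fun s => ?_)
    calc ‖∏ n ∈ s, c n‖ = ∏ n ∈ s, ‖c n‖ := norm_prod s c
      _ ≤ ∏ n ∈ s, Real.exp (g n) :=
        Finset.prod_le_prod (fun n _ => norm_nonneg _) (fun n _ => hb n)
      _ = Real.exp (∑ n ∈ s, g n) := (Real.exp_sum s g).symm
      _ ≤ Real.exp (∑' n, g n) := Real.exp_le_exp.2 (Summable.sum_le_tsum s (fun n _ => hgn n) hg)
  · rw [tprod_eq_one_of_not_multipliable hm, norm_one]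
    exact Real.one_le_exp (tsum_nonneg hgn)

/-- let `f(z) = ∏ (1 - z λ_n)` be a genus-zero canonical product with
`∑ |λ_n| < ∞`, and `N(r) = #{n : |λ_n| ≥ r}`. If `N(r) ≤ |log r|^τ` for small `r`, then
`log |f(z)| ≤ C (log (1+|z|))^{1+τ}` for large `|z|`; in particular the order of growth of
`z ↦ f(e^z)` is at most `τ + 1`. -/
theorem statement6 (lam : ℕ → ℂ) (hsum : Summable fun n => ‖lam n‖)
    (τ : ℝ) (hτ : 0 < τ)
    (hN : ∃ r0 : ℝ, 0 < r0 ∧ ∀ r : ℝ, 0 < r → r < r0 →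
      (({n : ℕ | r ≤ ‖lam n‖}).ncard : ℝ) ≤ |Real.log r| ^ τ) :
    (∃ C : ℝ, 0 < C ∧ ∃ R0 : ℝ, ∀ z : ℂ, R0 ≤ ‖z‖ →
        Real.log ‖∏' n : ℕ, (1 - z * lam n)‖ ≤ C * (Real.log (1 + ‖z‖)) ^ (1 + τ)) ∧
      ∀ ε : ℝ, 0 < ε → ∃ R1 : ℝ, ∀ w : ℂ, R1 ≤ ‖w‖ →
        Real.log (max 1 (Real.log ‖∏' n : ℕ, (1 - Complex.exp w * lam n)‖)) ≤
          (τ + 1 + ε) * Real.log ‖w‖ := by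
  obtain ⟨r0, hr0, hNr⟩ := hN
  have ha : ∀ n, (0:ℝ) ≤ ‖lam n‖ := fun n => norm_nonneg _
  have hs : Summable (fun n => ‖lam n‖) := hsum
  have hA0 : (0:ℝ) ≤ ∑' n, ‖lam n‖ := tsum_nonneg ha
  set A := ∑' n, ‖lam n‖ with hA
  set C : ℝ := 1 + (2:ℝ)^(1+τ) + A with hC
  have hCpos : 0 < C := by positivity
  set R0 : ℝ := max 2 (max (2 * (2:ℝ)^τ) (max (2/r0) (Real.exp 1))) with hR0
  have hR0pos : (0:ℝ) < R0 := lt_of_lt_of_le two_pos (le_max_left _ _)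
  have hgpos : ∀ (z : ℂ) (n : ℕ), (0:ℝ) < 1 + ‖z‖ * ‖lam n‖ := by
    intro z n; nlinarith [ha n, norm_nonneg z, mul_nonneg (norm_nonneg z) (ha n)]
  have hg0 : ∀ (z : ℂ) (n : ℕ), 0 ≤ Real.log (1 + ‖z‖ * ‖lam n‖) := by
    intro z n
    exact Real.log_nonneg (by nlinarith [mul_nonneg (norm_nonneg z) (ha n)])
  have hgle : ∀ (z : ℂ) (n : ℕ), Real.log (1 + ‖z‖ * ‖lam n‖) ≤ ‖z‖ * ‖lam n‖ := by
    intro z n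
    have := Real.log_le_sub_one_of_pos (hgpos z n)
    linarith
  have hgs : ∀ z : ℂ, Summable (fun n => Real.log (1 + ‖z‖ * ‖lam n‖)) := fun z =>
    Summable.of_nonneg_of_le (hg0 z) (hgle z) (hs.mul_left _)
  have hgen : ∀ z : ℂ, ‖∏' n : ℕ, (1 - z * lam n)‖ ≤
      Real.exp (∑' n, Real.log (1 + ‖z‖ * ‖lam n‖)) := by
    intro z
    refine tprod_norm_le _ _ (hgs z) (hg0 z) fun n => ?_
    rw [Real.exp_log (hgpos z n)]
    calc ‖1 - z * lam n‖ ≤ ‖(1:ℂ)‖ + ‖z * lam n‖ := norm_sub_le _ _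
      _ = 1 + ‖z‖ * ‖lam n‖ := by rw [norm_one, norm_mul]
  have hlog : ∀ z : ℂ, Real.log ‖∏' n : ℕ, (1 - z * lam n)‖ ≤
      ∑' n, Real.log (1 + ‖z‖ * ‖lam n‖) := by
    intro z
    have hS0 : 0 ≤ ∑' n, Real.log (1 + ‖z‖ * ‖lam n‖) := tsum_nonneg (hg0 z)
    rcases (norm_nonneg (∏' n : ℕ, (1 - z * lam n))).eq_or_lt with h0 | h0
    · rw [← h0, Real.log_zero]; exact hS0
    · calc Real.log ‖∏' n : ℕ, (1 - z * lam n)‖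
          ≤ Real.log (Real.exp (∑' n, Real.log (1 + ‖z‖ * ‖lam n‖))) :=
            Real.log_le_log h0 (hgen z)
        _ = _ := Real.log_exp _
  have key : ∀ z : ℂ, R0 ≤ ‖z‖ →
      Real.log ‖∏' n : ℕ, (1 - z * lam n)‖ ≤ C * (Real.log (1 + ‖z‖))^(1+τ) := by
    intro z hz
    rw [hR0] at hz
    exact le_trans (hlog z) (sum_log_bound _ ha hs τ r0 hτ hr0 hNr hz)
  refine ⟨⟨C, hCpos, R0, key⟩, ?_⟩
  intro ε hε
  set C' : ℝ := C + R0 * A + 1 with hC'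
  have hC'1 : 1 ≤ C' := by nlinarith [mul_nonneg hR0pos.le hA0]
  have hC'pos : 0 < C' := by linarith
  have hglob : ∀ z : ℂ, Real.log ‖∏' n : ℕ, (1 - z * lam n)‖ ≤ ‖z‖ * A := by
    intro z
    refine le_trans (hlog z) ?_
    calc ∑' n, Real.log (1 + ‖z‖ * ‖lam n‖) ≤ ∑' n, ‖z‖ * ‖lam n‖ :=
        Summable.tsum_le_tsum (hgle z) (hgs z) (hs.mul_left _)
      _ = ‖z‖ * A := by rw [tsum_mul_left]
  have hbound2 : ∀ w : ℂ, Real.log ‖∏' n : ℕ, (1 - Complex.exp w * lam n)‖ ≤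
      C' * (‖w‖ + 1)^(1+τ) := by
    intro w
    have hw0 : (0:ℝ) ≤ ‖w‖ := norm_nonneg w
    have hbase : (1:ℝ) ≤ (‖w‖+1)^(1+τ) := Real.one_le_rpow (by linarith) (by linarith)
    have hbase0 : (0:ℝ) ≤ (‖w‖+1)^(1+τ) := by linarith
    by_cases hz : R0 ≤ ‖Complex.exp w‖
    · have h1 := key _ hz
      have hlognn : 0 ≤ Real.log (1 + ‖Complex.exp w‖) :=
        Real.log_nonneg (by nlinarith [norm_nonneg (Complex.exp w)])
      have h2 : Real.log (1 + ‖Complex.exp w‖) ≤ ‖w‖ + 1 := by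
        have h3 : ‖Complex.exp w‖ ≤ Real.exp ‖w‖ := by
          rw [Complex.norm_exp]
          exact Real.exp_le_exp.mpr (le_trans (le_abs_self _) (Complex.abs_re_le_norm w))
        have hexp1 : (1:ℝ) ≤ Real.exp ‖w‖ := Real.one_le_exp hw0
        have h4 : 1 + Real.exp ‖w‖ ≤ Real.exp (‖w‖+1) := by
          rw [Real.exp_add]
          nlinarith [Real.exp_one_gt_d9]
        calc Real.log (1 + ‖Complex.exp w‖) ≤ Real.log (Real.exp (‖w‖+1)) :=
            Real.log_le_log (by nlinarith [norm_nonneg (Complex.exp w)]) (by linarith)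
          _ = ‖w‖ + 1 := Real.log_exp _
      calc Real.log ‖∏' n : ℕ, (1 - Complex.exp w * lam n)‖
          ≤ C * (Real.log (1 + ‖Complex.exp w‖))^(1+τ) := h1
        _ ≤ C * (‖w‖+1)^(1+τ) :=
            mul_le_mul_of_nonneg_left (Real.rpow_le_rpow hlognn h2 (by linarith)) hCpos.le
        _ ≤ C' * (‖w‖+1)^(1+τ) := by
            refine mul_le_mul_of_nonneg_right (by nlinarith [mul_nonneg hR0pos.le hA0]) hbase0
    · have h1 := hglob (Complex.exp w)
      have h2 : ‖Complex.exp w‖ * A ≤ R0 * A :=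
        mul_le_mul_of_nonneg_right (le_of_not_ge hz) hA0
      have h3 : R0 * A ≤ C' := by nlinarith
      calc Real.log ‖∏' n : ℕ, (1 - Complex.exp w * lam n)‖ ≤ ‖Complex.exp w‖ * A := h1
        _ ≤ C' := le_trans h2 h3
        _ ≤ C' * (‖w‖+1)^(1+τ) := by nlinarith
  refine ⟨Real.exp ((Real.log C' + (1+τ)*Real.log 2)/ε) + 1, ?_⟩
  intro w hw
  have hq : (0:ℝ) < Real.exp ((Real.log C' + (1+τ)*Real.log 2)/ε) := Real.exp_pos _
  have hw1 : (1:ℝ) ≤ ‖w‖ := by linarith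
  have hwpos : (0:ℝ) < ‖w‖ := by linarith
  have hlogw : (Real.log C' + (1+τ)*Real.log 2)/ε ≤ Real.log ‖w‖ := by
    rw [← Real.log_exp ((Real.log C' + (1+τ)*Real.log 2)/ε)]
    exact Real.log_le_log hq (by linarith)
  have hεlog : Real.log C' + (1+τ)*Real.log 2 ≤ ε * Real.log ‖w‖ := by
    rw [div_le_iff₀ hε] at hlogw
    linarith [hlogw]
  have hbase : (1:ℝ) ≤ (‖w‖+1)^(1+τ) := Real.one_le_rpow (by linarith) (by linarith)
  have hX1 : 1 ≤ C' * (‖w‖+1)^(1+τ) := by nlinarith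
  have hL := hbound2 w
  have hmax : max 1 (Real.log ‖∏' n : ℕ, (1 - Complex.exp w * lam n)‖)
      ≤ C' * (‖w‖+1)^(1+τ) := max_le hX1 hL
  have hstep : Real.log (max 1 (Real.log ‖∏' n : ℕ, (1 - Complex.exp w * lam n)‖))
      ≤ Real.log (C' * (‖w‖+1)^(1+τ)) :=
    Real.log_le_log (lt_of_lt_of_le one_pos (le_max_left _ _)) hmax
  have hrpos : (0:ℝ) < (‖w‖+1)^(1+τ) := Real.rpow_pos_of_pos (by linarith) _
  have hlogX : Real.log (C' * (‖w‖+1)^(1+τ))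
      = Real.log C' + (1+τ) * Real.log (‖w‖+1) := by
    rw [Real.log_mul (ne_of_gt hC'pos) (ne_of_gt hrpos), Real.log_rpow (by linarith)]
  have hlogw1 : Real.log (‖w‖+1) ≤ Real.log 2 + Real.log ‖w‖ := by
    rw [← Real.log_mul two_ne_zero (ne_of_gt hwpos)]
    exact Real.log_le_log (by linarith) (by linarith)
  have hlogC' : 0 ≤ Real.log C' := Real.log_nonneg hC'1
  have hlog2 : (0:ℝ) ≤ Real.log 2 := Real.log_nonneg (by norm_num)
  have hlogwnn : 0 ≤ Real.log ‖w‖ := Real.log_nonneg hw1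
  calc Real.log (max 1 (Real.log ‖∏' n : ℕ, (1 - Complex.exp w * lam n)‖))
      ≤ Real.log (C' * (‖w‖+1)^(1+τ)) := hstep
    _ = Real.log C' + (1+τ) * Real.log (‖w‖+1) := hlogX
    _ ≤ Real.log C' + (1+τ) * (Real.log 2 + Real.log ‖w‖) := by nlinarith
    _ ≤ (τ + 1 + ε) * Real.log ‖w‖ := by nlinarith
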